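/- Fix 0 < q < 1 and write α := α_q, γ := γ_q. Then: (i) the operator αα* is invertible on ℓ²(ℕ×ℤ); (ii) P := 1 − α*(αα*)⁻¹α is the orthogonal projection onto the closed linear span of {e_{0,k} : k ∈ ℤ}; (iii) the operator w̃ := 1 + (γ − 1)P is unitary and satisfies w̃ e_{n,k} = e_{n,k} for all n ≥ 1 and w̃ e_{0,k} = e_{0,k−1}; (iv) w̃ = γ₀ + α₀*α₀. -/

import Mathlib

open scoped InnerProductSpace ComplexConjugate ENNReal


/-- `ℓ²(ℕ×ℤ)`: the Hilbert space of square-summable complex families indexed by `ℕ × ℤ`. -/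
noncomputable abbrev l2NZ : Type := lp (fun _ : ℕ × ℤ => ℂ) 2

/-- The standard orthonormal basis vectors `e_{n,k}` of `ℓ²(ℕ×ℤ)`. -/
noncomputable def eNZ (n : ℕ) (k : ℤ) : l2NZ := lp.single 2 (n, k) (1 : ℂ)

/-- The defining property of the operators `α_t, γ_t` on `ℓ²(ℕ×ℤ)`:
`α_t e_{n,k} = √(1−t^{2n}) e_{n−1,k−1}` for `n ≥ 1`, `α_t e_{0,k} = 0`, and
`γ_t e_{n,k} = tⁿ e_{n,k−1}` (with the convention `0⁰ = 1`, so at `t = 0` this reads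
`α₀ e_{n,k} = e_{n−1,k−1}` for `n ≥ 1`, `α₀ e_{0,k} = 0`, `γ₀ e_{0,k} = e_{0,k−1}`,
`γ₀ e_{n,k} = 0` for `n ≥ 1`). -/
def IsAlphaGamma (t : ℝ) (α γ : l2NZ →L[ℂ] l2NZ) : Prop :=
  (∀ (n : ℕ) (k : ℤ),
    α (eNZ (n + 1) k) = (Real.sqrt (1 - t ^ (2 * (n + 1))) : ℂ) • eNZ n (k - 1)) ∧
  (∀ k : ℤ, α (eNZ 0 k) = 0) ∧
  (∀ (n : ℕ) (k : ℤ), γ (eNZ n k) = ((t ^ n : ℝ) : ℂ) • eNZ n (k - 1))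

/-- The closed linear span of `{e_{0,k} : k ∈ ℤ}` in `ℓ²(ℕ×ℤ)`. -/
noncomputable def spanE0 : Submodule ℂ l2NZ :=
  (Submodule.span ℂ (Set.range fun k : ℤ => eNZ 0 k)).topologicalClosure

namespace NZAux

lemma eNZ_coord (n : ℕ) (k : ℤ) (i : ℕ × ℤ) :
    (eNZ n k : ∀ _ : ℕ × ℤ, ℂ) i = if i = (n, k) then 1 else 0 := by
  classical
  rw [eNZ, lp.single_apply]
  by_cases h : i = (n, k)
  · subst h; simp
  · simp [h]

lemma inner_eNZ (n : ℕ) (k : ℤ) (x : l2NZ) : ⟪eNZ n k, x⟫_ℂ = x (n, k) := by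
  classical
  rw [eNZ, lp.inner_single_left]
  simp

lemma inner_eNZ_eNZ (m n : ℕ) (j k : ℤ) :
    ⟪eNZ m j, eNZ n k⟫_ℂ = if m = n ∧ j = k then 1 else 0 := by
  rw [inner_eNZ, eNZ_coord]
  simp [Prod.ext_iff]

lemma vec_ext {x y : l2NZ} (h : ∀ (n : ℕ) (k : ℤ), ⟪eNZ n k, x⟫_ℂ = ⟪eNZ n k, y⟫_ℂ) :
    x = y := by
  apply lp.ext
  funext i
  have := h i.1 i.2
  rwa [inner_eNZ, inner_eNZ] at this

lemma denseSpan :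
    Dense ((Submodule.span ℂ (Set.range fun i : ℕ × ℤ => eNZ i.1 i.2) : Submodule ℂ l2NZ) :
      Set l2NZ) := by
  classical
  rw [Submodule.dense_iff_topologicalClosure_eq_top, eq_top_iff]
  rintro x -
  have hx : HasSum (fun i => lp.single 2 i (x i)) x := lp.hasSum_single ENNReal.ofNat_ne_top x
  refine mem_closure_of_tendsto hx (Filter.Eventually.of_forall fun s => ?_)
  simp only [SetLike.mem_coe]
  refine Submodule.sum_mem _ fun i _ => ?_
  have hsm : lp.single 2 i (x i) = (x i) • eNZ i.1 i.2 := by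
    rw [eNZ]
    have := lp.single_smul (E := fun _ : ℕ × ℤ => ℂ) 2 i (x i) (1 : ℂ)
    rw [smul_eq_mul, mul_one] at this
    rw [this]
  rw [hsm]
  exact Submodule.smul_mem _ _ (Submodule.subset_span ⟨i, rfl⟩)

lemma op_ext {A B : l2NZ →L[ℂ] l2NZ}
    (h : ∀ (n : ℕ) (k : ℤ), A (eNZ n k) = B (eNZ n k)) : A = B := by
  apply ContinuousLinearMap.ext_on denseSpan
  rintro _ ⟨i, rfl⟩
  exact h i.1 i.2



lemma adjoint_alpha {t : ℝ} {α γ : l2NZ →L[ℂ] l2NZ} (h : IsAlphaGamma t α γ)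
    (n : ℕ) (k : ℤ) :
    ContinuousLinearMap.adjoint α (eNZ n k)
      = (Real.sqrt (1 - t ^ (2 * (n + 1))) : ℂ) • eNZ (n + 1) (k + 1) := by
  apply vec_ext
  intro m j
  rw [ContinuousLinearMap.adjoint_inner_right, inner_smul_right, inner_eNZ_eNZ]
  cases m with
  | zero =>
    rw [h.2.1 j, inner_zero_left]
    simp
  | succ m =>
    rw [h.1 m j, inner_smul_left, inner_eNZ_eNZ, Complex.conj_ofReal]
    by_cases hc : m = n ∧ j = k + 1
    · obtain ⟨rfl, rfl⟩ := hc
      simp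
    · have h1 : ¬(m = n ∧ j - 1 = k) := fun hh => hc ⟨hh.1, by omega⟩
      have h2 : ¬(m + 1 = n + 1 ∧ j = k + 1) := fun hh => hc ⟨by omega, hh.2⟩
      rw [if_neg h1, if_neg h2, mul_zero, mul_zero]

lemma adjoint_gamma {t : ℝ} {α γ : l2NZ →L[ℂ] l2NZ} (h : IsAlphaGamma t α γ)
    (n : ℕ) (k : ℤ) :
    ContinuousLinearMap.adjoint γ (eNZ n k) = ((t ^ n : ℝ) : ℂ) • eNZ n (k + 1) := by
  apply vec_ext
  intro m j
  rw [ContinuousLinearMap.adjoint_inner_right, inner_smul_right, inner_eNZ_eNZ,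
    h.2.2 m j, inner_smul_left, inner_eNZ_eNZ, Complex.conj_ofReal]
  by_cases hc : m = n ∧ j = k + 1
  · obtain ⟨rfl, rfl⟩ := hc
    simp
  · have h1 : ¬(m = n ∧ j - 1 = k) := fun hh => hc ⟨hh.1, by omega⟩
    have h2 : ¬(m = n ∧ j = k + 1) := hc
    rw [if_neg h1, if_neg h2, mul_zero, mul_zero]

lemma diag_sum_bound (m : ℕ × ℤ → ℂ) {C : ℝ} (hC : 0 ≤ C) (hm : ∀ i, ‖m i‖ ≤ C)
    (x : l2NZ) (s : Finset (ℕ × ℤ)) :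
    ∑ i ∈ s, ‖m i * x i‖ ^ (2 : ℝ≥0∞).toReal ≤ (C * ‖x‖) ^ (2 : ℝ≥0∞).toReal := by
  have h2 : (0 : ℝ) < (2 : ℝ≥0∞).toReal := by norm_num
  calc ∑ i ∈ s, ‖m i * x i‖ ^ (2 : ℝ≥0∞).toReal
      ≤ ∑ i ∈ s, C ^ (2 : ℝ≥0∞).toReal * ‖x i‖ ^ (2 : ℝ≥0∞).toReal := by
        refine Finset.sum_le_sum fun i _ => ?_
        rw [← Real.mul_rpow hC (norm_nonneg _)]
        refine Real.rpow_le_rpow (norm_nonneg _) ?_ h2.le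
        rw [norm_mul]
        exact mul_le_mul_of_nonneg_right (hm i) (norm_nonneg _)
    _ = C ^ (2 : ℝ≥0∞).toReal * ∑ i ∈ s, ‖x i‖ ^ (2 : ℝ≥0∞).toReal := by
        rw [Finset.mul_sum]
    _ ≤ C ^ (2 : ℝ≥0∞).toReal * ‖x‖ ^ (2 : ℝ≥0∞).toReal := by
        refine mul_le_mul_of_nonneg_left ?_ (Real.rpow_nonneg hC _)
        exact lp.sum_rpow_le_norm_rpow h2 x s
    _ = (C * ‖x‖) ^ (2 : ℝ≥0∞).toReal := (Real.mul_rpow hC (norm_nonneg _)).symm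

lemma exists_diagOp (m : ℕ × ℤ → ℂ) (C : ℝ) (hC : 0 ≤ C) (hm : ∀ i, ‖m i‖ ≤ C) :
    ∃ D : l2NZ →L[ℂ] l2NZ, ∀ (x : l2NZ) (i : ℕ × ℤ), D x i = m i * x i := by
  have hmem : ∀ x : l2NZ, Memℓp (fun i => m i * x i) 2 := fun x =>
    memℓp_gen' (diag_sum_bound m hC hm x)
  refine ⟨LinearMap.mkContinuous
    { toFun := fun x => ⟨fun i => m i * x i, hmem x⟩
      map_add' := ?_
      map_smul' := ?_ } C ?_, fun x i => rfl⟩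
  · intro x y
    apply lp.ext
    funext i
    simp only [lp.coeFn_add, Pi.add_apply]
    exact mul_add _ _ _
  · intro c x
    apply lp.ext
    funext i
    simp only [lp.coeFn_smul, Pi.smul_apply, smul_eq_mul, RingHom.id_apply]
    ring
  · intro x
    exact lp.norm_le_of_forall_sum_le (by norm_num) (mul_nonneg hC (norm_nonneg _))
      (diag_sum_bound m hC hm x)

lemma exists_D (q : ℝ) (hq0 : 0 < q) (hq1 : q < 1) :
    ∃ D : l2NZ →L[ℂ] l2NZ, ∀ (n : ℕ) (k : ℤ),
      D (eNZ n k) = (((1 - q ^ (2 * (n + 1)))⁻¹ : ℝ) : ℂ) • eNZ n k := by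
  have hpos : ∀ n : ℕ, (0 : ℝ) < 1 - q ^ (2 * (n + 1)) := fun n => by
    have : q ^ (2 * (n + 1)) < 1 := pow_lt_one₀ hq0.le hq1 (by omega)
    linarith
  have hpos2 : (0 : ℝ) < 1 - q ^ 2 := by
    have : q ^ 2 < 1 := pow_lt_one₀ hq0.le hq1 (by norm_num)
    linarith
  have hbd : ∀ i : ℕ × ℤ, ‖((((1 - q ^ (2 * (i.1 + 1)))⁻¹ : ℝ)) : ℂ)‖ ≤ (1 - q ^ 2)⁻¹ := by
    intro i
    rw [Complex.norm_real, Real.norm_eq_abs, abs_of_pos (inv_pos.2 (hpos i.1))]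
    refine inv_anti₀ hpos2 ?_
    have : q ^ (2 * (i.1 + 1)) ≤ q ^ 2 :=
      pow_le_pow_of_le_one hq0.le hq1.le (by omega)
    linarith
  obtain ⟨D, hD⟩ := exists_diagOp (fun i => (((1 - q ^ (2 * (i.1 + 1)))⁻¹ : ℝ) : ℂ))
    ((1 - q ^ 2)⁻¹) (inv_nonneg.2 hpos2.le) hbd
  refine ⟨D, fun n k => ?_⟩
  apply lp.ext
  funext i
  rw [hD (eNZ n k) i, lp.coeFn_smul, Pi.smul_apply, smul_eq_mul, eNZ_coord]
  by_cases hi : i = (n, k)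
  · subst hi
    simp
  · simp [hi]


lemma mem_spanE0 (P : l2NZ →L[ℂ] l2NZ) (hadj : ContinuousLinearMap.adjoint P = P)
    (hP1 : ∀ (n : ℕ) (k : ℤ), P (eNZ (n + 1) k) = 0) (v : l2NZ) : P v ∈ spanE0 := by
  have hS : spanE0 = ((Submodule.span ℂ (Set.range fun k : ℤ => eNZ 0 k))ᗮ)ᗮ :=
    (Submodule.orthogonal_orthogonal_eq_closure _).symm
  rw [hS, Submodule.mem_orthogonal]
  intro u hu
  have hzero : ∀ i : ℕ × ℤ, ⟪u i, (P v) i⟫_ℂ = 0 := by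
    rintro ⟨n, k⟩
    rw [RCLike.inner_apply]
    cases n with
    | zero =>
      have hu0 : u (0, k) = 0 := by
        have h0 := (Submodule.mem_orthogonal _ u).mp hu (eNZ 0 k)
          (Submodule.subset_span ⟨k, rfl⟩)
        rwa [inner_eNZ] at h0
      rw [hu0, map_zero, mul_zero]
    | succ n =>
      have hPv : (P v) (n + 1, k) = 0 := by
        rw [← inner_eNZ, ← ContinuousLinearMap.adjoint_inner_left, hadj, hP1,
          inner_zero_left]
      rw [hPv, zero_mul]
  have hsum := lp.hasSum_inner (𝕜 := ℂ) u (P v)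
  have h0 : (fun i => ⟪u i, (P v) i⟫_ℂ) = fun _ => 0 := funext hzero
  rw [h0] at hsum
  simpa using hsum.unique hasSum_zero

lemma spanE0_fixed (P : l2NZ →L[ℂ] l2NZ) (hP0 : ∀ k : ℤ, P (eNZ 0 k) = eNZ 0 k)
    {v : l2NZ} (hv : v ∈ spanE0) : P v = v := by
  have hle : spanE0 ≤ LinearMap.ker ((P - 1 : l2NZ →L[ℂ] l2NZ) : l2NZ →ₗ[ℂ] l2NZ) := by
    apply Submodule.topologicalClosure_minimal
    · rw [Submodule.span_le]
      rintro _ ⟨k, rfl⟩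
      simp [LinearMap.mem_ker, ContinuousLinearMap.sub_apply,
        ContinuousLinearMap.one_apply, hP0 k]
    · exact ContinuousLinearMap.isClosed_ker _
  have hk := hle hv
  rw [LinearMap.mem_ker] at hk
  have : P v - v = 0 := by
    rw [← hk]
    rfl
  exact sub_eq_zero.mp this
  
end NZAux

set_option maxHeartbeats 1000000 in
open ContinuousLinearMap in
/-- **Statement 12.** Fix `0 < q < 1` and write `α := α_q`, `γ := γ_q`. Then:
(i) `αα*` is invertible; (ii) `P := 1 − α*(αα*)⁻¹α` is the orthogonal projection onto the
closed linear span of `{e_{0,k} : k ∈ ℤ}` (i.e. `P` is a self-adjoint idempotent whose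
fixed vectors are exactly that subspace); (iii) `w̃ := 1 + (γ − 1)P` is unitary and
satisfies `w̃ e_{n,k} = e_{n,k}` for `n ≥ 1` and `w̃ e_{0,k} = e_{0,k−1}`;
(iv) `w̃ = γ₀ + α₀*α₀`. -/
theorem wTilde_properties (q : ℝ) (hq0 : 0 < q) (hq1 : q < 1)
    (α γ α₀ γ₀ : l2NZ →L[ℂ] l2NZ)
    (h : IsAlphaGamma q α γ) (h0 : IsAlphaGamma 0 α₀ γ₀) :
    IsUnit (α * adjoint α) ∧
    (adjoint (1 - adjoint α * Ring.inverse (α * adjoint α) * α)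
        = 1 - adjoint α * Ring.inverse (α * adjoint α) * α ∧
      (1 - adjoint α * Ring.inverse (α * adjoint α) * α)
          * (1 - adjoint α * Ring.inverse (α * adjoint α) * α)
        = 1 - adjoint α * Ring.inverse (α * adjoint α) * α ∧
      ∀ v : l2NZ,
        (1 - adjoint α * Ring.inverse (α * adjoint α) * α) v = v ↔ v ∈ spanE0) ∧
    (adjoint (1 + (γ - 1) * (1 - adjoint α * Ring.inverse (α * adjoint α) * α))
          * (1 + (γ - 1) * (1 - adjoint α * Ring.inverse (α * adjoint α) * α)) = 1 ∧
      (1 + (γ - 1) * (1 - adjoint α * Ring.inverse (α * adjoint α) * α))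
          * adjoint (1 + (γ - 1) * (1 - adjoint α * Ring.inverse (α * adjoint α) * α))
        = 1 ∧
      (∀ (n : ℕ) (k : ℤ),
        (1 + (γ - 1) * (1 - adjoint α * Ring.inverse (α * adjoint α) * α))
          (eNZ (n + 1) k) = eNZ (n + 1) k) ∧
      (∀ k : ℤ,
        (1 + (γ - 1) * (1 - adjoint α * Ring.inverse (α * adjoint α) * α))
          (eNZ 0 k) = eNZ 0 (k - 1))) ∧
    1 + (γ - 1) * (1 - adjoint α * Ring.inverse (α * adjoint α) * α)
      = γ₀ + adjoint α₀ * α₀ := by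
  classical
  obtain ⟨D, hD⟩ := NZAux.exists_D q hq0 hq1
  have hsq : ∀ n : ℕ, (0 : ℝ) ≤ 1 - q ^ (2 * (n + 1)) := fun n => by
    have : q ^ (2 * (n + 1)) < 1 := pow_lt_one₀ hq0.le hq1 (by omega)
    linarith
  have hne : ∀ n : ℕ, (1 - q ^ (2 * (n + 1)) : ℝ) ≠ 0 := fun n => by
    have : q ^ (2 * (n + 1)) < 1 := pow_lt_one₀ hq0.le hq1 (by omega)
    have : (0 : ℝ) < 1 - q ^ (2 * (n + 1)) := by linarith
    exact ne_of_gt this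
  have hcc : ∀ n : ℕ, (Real.sqrt (1 - q ^ (2 * (n + 1))) : ℂ) *
      (Real.sqrt (1 - q ^ (2 * (n + 1))) : ℂ) = ((1 - q ^ (2 * (n + 1)) : ℝ) : ℂ) := fun n => by
    rw [← Complex.ofReal_mul, Real.mul_self_sqrt (hsq n)]
  simp only [← ContinuousLinearMap.star_eq_adjoint]
  have hSα : ∀ (n : ℕ) (k : ℤ), star α (eNZ n k)
      = (Real.sqrt (1 - q ^ (2 * (n + 1))) : ℂ) • eNZ (n + 1) (k + 1) := fun n k => by
    rw [ContinuousLinearMap.star_eq_adjoint]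
    exact NZAux.adjoint_alpha h n k
  have hSγ : ∀ (n : ℕ) (k : ℤ), star γ (eNZ n k)
      = ((q ^ n : ℝ) : ℂ) • eNZ n (k + 1) := fun n k => by
    rw [ContinuousLinearMap.star_eq_adjoint]
    exact NZAux.adjoint_gamma h n k
  have hSα0 : ∀ (n : ℕ) (k : ℤ), star α₀ (eNZ n k) = eNZ (n + 1) (k + 1) := fun n k => by
    rw [ContinuousLinearMap.star_eq_adjoint, NZAux.adjoint_alpha h0]
    norm_num
  have hα0 : ∀ (n : ℕ) (k : ℤ), α₀ (eNZ (n + 1) k) = eNZ n (k - 1) := fun n k => by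
    rw [h0.1 n k]
    norm_num
  have hA : ∀ (n : ℕ) (k : ℤ), (α * star α) (eNZ n k)
      = ((1 - q ^ (2 * (n + 1)) : ℝ) : ℂ) • eNZ n k := fun n k => by
    rw [ContinuousLinearMap.mul_apply, hSα, map_smul, h.1 n (k + 1), smul_smul, hcc]
    simp
  have h1 : (α * star α) * D = 1 := NZAux.op_ext fun n k => by
    rw [ContinuousLinearMap.mul_apply, hD, map_smul, hA n k, smul_smul, ← Complex.ofReal_mul,
      inv_mul_cancel₀ (hne n), Complex.ofReal_one, one_smul, ContinuousLinearMap.one_apply]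
  have h2 : D * (α * star α) = 1 := NZAux.op_ext fun n k => by
    rw [ContinuousLinearMap.mul_apply, hA n k, map_smul, hD, smul_smul, ← Complex.ofReal_mul,
      mul_inv_cancel₀ (hne n), Complex.ofReal_one, one_smul, ContinuousLinearMap.one_apply]
  have hu : IsUnit (α * star α) := ⟨⟨α * star α, D, h1, h2⟩, rfl⟩
  have hinv : Ring.inverse (α * star α) = D :=
    Ring.inverse_unit (⟨α * star α, D, h1, h2⟩ : (l2NZ →L[ℂ] l2NZ)ˣ)
  rw [hinv]
  set P : l2NZ →L[ℂ] l2NZ := 1 - star α * D * α with hPdef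
  have hP0 : ∀ k : ℤ, P (eNZ 0 k) = eNZ 0 k := fun k => by
    rw [hPdef, sub_apply, ContinuousLinearMap.one_apply, ContinuousLinearMap.mul_apply, ContinuousLinearMap.mul_apply, h.2.1 k, map_zero, map_zero,
      sub_zero]
  have hP1 : ∀ (n : ℕ) (k : ℤ), P (eNZ (n + 1) k) = 0 := fun n k => by
    have key : (star α * D * α) (eNZ (n + 1) k) = eNZ (n + 1) k := by
      rw [ContinuousLinearMap.mul_apply, ContinuousLinearMap.mul_apply, h.1 n k, map_smul, hD, map_smul, map_smul, hSα,
        smul_smul, smul_smul]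
      have hk : k - 1 + 1 = k := by ring
      rw [hk]
      have hco : ((Real.sqrt (1 - q ^ (2 * (n + 1))) : ℂ) *
            (((1 - q ^ (2 * (n + 1)))⁻¹ : ℝ) : ℂ)) *
            (Real.sqrt (1 - q ^ (2 * (n + 1))) : ℂ) = 1 := by
        rw [mul_comm (Real.sqrt (1 - q ^ (2 * (n + 1))) : ℂ)
            ((((1 - q ^ (2 * (n + 1)))⁻¹ : ℝ)) : ℂ), mul_assoc, hcc, ← Complex.ofReal_mul,
          inv_mul_cancel₀ (hne n), Complex.ofReal_one]
      rw [hco, one_smul]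
    rw [hPdef, sub_apply, ContinuousLinearMap.one_apply, key, sub_self]
  have hsA : star (α * star α) = α * star α := by rw [star_mul, star_star]
  have h3 : (α * star α) * star D = 1 := by
    have hh := congrArg star h2
    rwa [star_mul, star_one, hsA] at hh
  have hDstar : star D = D := by
    calc star D = (D * (α * star α)) * star D := by rw [h2, one_mul]
      _ = D * ((α * star α) * star D) := by rw [mul_assoc]
      _ = D := by rw [h3, mul_one]
  have hPstar : star P = P := by
    rw [hPdef]
    simp only [star_sub, star_one, star_mul, star_star, hDstar, mul_assoc]
  have hPP : P * P = P := NZAux.op_ext fun n k => by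
    cases n with
    | zero => rw [ContinuousLinearMap.mul_apply, hP0, hP0]
    | succ n => rw [ContinuousLinearMap.mul_apply, hP1, map_zero]
  have hPmem : ∀ v : l2NZ, P v ∈ spanE0 :=
    NZAux.mem_spanE0 P (by rw [← ContinuousLinearMap.star_eq_adjoint]; exact hPstar) hP1
  have hfix : ∀ v : l2NZ, P v = v ↔ v ∈ spanE0 := fun v =>
    ⟨fun hv => hv ▸ hPmem v, fun hv => NZAux.spanE0_fixed P hP0 hv⟩
  set W : l2NZ →L[ℂ] l2NZ := 1 + (γ - 1) * P with hWdef
  have hW1 : ∀ (n : ℕ) (k : ℤ), W (eNZ (n + 1) k) = eNZ (n + 1) k := fun n k => by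
    rw [hWdef, add_apply, ContinuousLinearMap.one_apply, ContinuousLinearMap.mul_apply, hP1, map_zero, add_zero]
  have hW0 : ∀ k : ℤ, W (eNZ 0 k) = eNZ 0 (k - 1) := fun k => by
    rw [hWdef, add_apply, ContinuousLinearMap.one_apply, ContinuousLinearMap.mul_apply, hP0, sub_apply, ContinuousLinearMap.one_apply, h.2.2 0 k]
    simp only [pow_zero, Complex.ofReal_one, one_smul]
    abel
  have hWstar : star W = 1 + P * (star γ - 1) := by
    rw [hWdef, star_add, star_one, star_mul, hPstar, star_sub, star_one]
  have hWS1 : ∀ (n : ℕ) (k : ℤ),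
      (1 + P * (star γ - 1)) (eNZ (n + 1) k) = eNZ (n + 1) k := fun n k => by
    have hsub1 : (star γ - 1) (eNZ (n + 1) k)
        = ((q ^ (n + 1) : ℝ) : ℂ) • eNZ (n + 1) (k + 1) - eNZ (n + 1) k := by
      rw [sub_apply, ContinuousLinearMap.one_apply, hSγ]
    rw [add_apply, ContinuousLinearMap.one_apply, ContinuousLinearMap.mul_apply, hsub1, map_sub, map_smul, hP1, hP1, smul_zero,
      sub_zero, add_zero]
  have hWS0 : ∀ k : ℤ,
      (1 + P * (star γ - 1)) (eNZ 0 k) = eNZ 0 (k + 1) := fun k => by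
    have hsub0 : (star γ - 1) (eNZ 0 k)
        = ((q ^ 0 : ℝ) : ℂ) • eNZ 0 (k + 1) - eNZ 0 k := by
      rw [sub_apply, ContinuousLinearMap.one_apply, hSγ]
    rw [add_apply, ContinuousLinearMap.one_apply, ContinuousLinearMap.mul_apply, hsub0, map_sub, map_smul, hP0, hP0]
    simp only [pow_zero, Complex.ofReal_one, one_smul]
    abel
  have hU1 : star W * W = 1 := NZAux.op_ext fun n k => by
    cases n with
    | zero =>
      rw [ContinuousLinearMap.mul_apply, hW0, hWstar, hWS0, ContinuousLinearMap.one_apply]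
      have hk : k - 1 + 1 = k := by ring
      rw [hk]
    | succ n => rw [ContinuousLinearMap.mul_apply, hW1, hWstar, hWS1, ContinuousLinearMap.one_apply]
  have hU2 : W * star W = 1 := NZAux.op_ext fun n k => by
    cases n with
    | zero =>
      rw [ContinuousLinearMap.mul_apply, hWstar, hWS0, hW0, ContinuousLinearMap.one_apply]
      have hk : k + 1 - 1 = k := by ring
      rw [hk]
    | succ n => rw [ContinuousLinearMap.mul_apply, hWstar, hWS1, hW1, ContinuousLinearMap.one_apply]
  have hfinal : W = γ₀ + star α₀ * α₀ := NZAux.op_ext fun n k => by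
    cases n with
    | zero =>
      rw [hW0, add_apply, ContinuousLinearMap.mul_apply, h0.2.2 0 k, h0.2.1 k, map_zero, add_zero]
      simp
    | succ n =>
      rw [hW1, add_apply, ContinuousLinearMap.mul_apply, h0.2.2 (n + 1) k, hα0 n k, hSα0]
      have hk : k - 1 + 1 = k := by ring
      rw [hk]
      simp
  exact ⟨hu, ⟨hPstar, hPP, hfix⟩, ⟨hU1, hU2, hW1, hW0⟩, hfinal⟩
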